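/- Pairing of rewrites: for any tree rewriting calculus TL, if T ↪*_{TL} S and T ↪*_{TL} S', then T ↪*_{TL} S + S'. -/

import Mathlib

inductive MTree : Type where
  | node : List ℕ → List (ℕ × MTree) → MTree

namespace MTree

mutual
def numNodes : MTree → ℕ
  | .node _ Γ => 1 + numNodesL Γ
def numNodesL : List (ℕ × MTree) → ℕ
  | [] => 0
  | (_, t) :: Γ => numNodes t + numNodesL Γ
end

mutual
def height : MTree → ℕ
  | .node _ [] => 0
  | .node _ (p :: Γ) => heightL (p :: Γ) + 1
def heightL : List (ℕ × MTree) → ℕ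
  | [] => 0
  | (_, t) :: Γ => max (height t) (heightL Γ)
end

mutual
def width : MTree → ℕ
  | .node _ [] => 1
  | .node _ (p :: Γ) => max (p :: Γ).length (widthL (p :: Γ))
def widthL : List (ℕ × MTree) → ℕ
  | [] => 0
  | (_, t) :: Γ => max (width t) (widthL Γ)
end

def sum : MTree → MTree → MTree
  | .node Δ Γ, .node Δ' Γ' => .node (Δ ++ Δ') (Γ ++ Γ')

inductive IsPos : List ℕ → MTree → Prop where
  | nil : ∀ t, IsPos [] t
  | cons : ∀ {Δ : List ℕ} {Γ : List (ℕ × MTree)} {i : ℕ} {k : List ℕ}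
      (h : i < Γ.length), IsPos k (Γ.get ⟨i, h⟩).2 → IsPos (i :: k) (.node Δ Γ)

def subtree : List ℕ → MTree → MTree
  | [], t => t
  | i :: k, .node Δ Γ =>
    match Γ[i]? with
    | some p => subtree k p.2
    | none => .node Δ Γ

def replace : List ℕ → MTree → MTree → MTree
  | [], _, s => s
  | i :: k, .node Δ Γ, s =>
      .node Δ (Γ.modify i (fun p => (p.1, replace k p.2 s)))

inductive RhoPlus : MTree → MTree → Prop where
  | mk : ∀ (Δ : List ℕ) (Γ : List (ℕ × MTree)) (i : ℕ) (h : i < Δ.length),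
      RhoPlus (.node Δ Γ) (.node (Δ.get ⟨i, h⟩ :: Δ) Γ)

inductive RhoMinus : MTree → MTree → Prop where
  | mk : ∀ (Δ : List ℕ) (Γ : List (ℕ × MTree)) (i : ℕ), i < Δ.length →
      RhoMinus (.node Δ Γ) (.node (Δ.eraseIdx i) Γ)

inductive Sigma' : MTree → MTree → Prop where
  | mk : ∀ (Δ : List ℕ) (Γ : List (ℕ × MTree)) (i j : ℕ)
      (hi : i < Γ.length) (hj : j < Γ.length), i ≠ j →
      Sigma' (.node Δ Γ) (.node Δ ((Γ.set i (Γ.get ⟨j, hj⟩)).set j (Γ.get ⟨i, hi⟩)))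

inductive PiPlus : MTree → MTree → Prop where
  | mk : ∀ (Δ : List ℕ) (Γ : List (ℕ × MTree)) (i : ℕ) (h : i < Γ.length),
      PiPlus (.node Δ Γ) (.node Δ (Γ.get ⟨i, h⟩ :: Γ))

inductive PiMinus : MTree → MTree → Prop where
  | mk : ∀ (Δ : List ℕ) (Γ : List (ℕ × MTree)) (i : ℕ), i < Γ.length →
      PiMinus (.node Δ Γ) (.node Δ (Γ.eraseIdx i))

inductive FourR : MTree → MTree → Prop where
  | mk : ∀ (Δ : List ℕ) (Γ : List (ℕ × MTree)) (i : ℕ) (h : i < Γ.length)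
      (β : ℕ) (s : MTree),
      Γ.get ⟨i, h⟩ = (β, .node [] [(β, s)]) →
      FourR (.node Δ Γ) (.node Δ (Γ.set i (β, s)))

inductive MonoR : MTree → MTree → Prop where
  | mk : ∀ (Δ : List ℕ) (Γ : List (ℕ × MTree)) (i : ℕ) (h : i < Γ.length)
      (α β : ℕ) (s : MTree),
      Γ.get ⟨i, h⟩ = (α, s) → β < α →
      MonoR (.node Δ Γ) (.node Δ (Γ.set i (β, s)))

inductive JayR : MTree → MTree → Prop where
  | mk : ∀ (Δ : List ℕ) (Γ : List (ℕ × MTree)) (i j : ℕ)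
      (hi : i < Γ.length) (hj : j < Γ.length)
      (α β : ℕ) (Δ' : List ℕ) (Γ' : List (ℕ × MTree)) (s : MTree),
      i ≠ j → Γ.get ⟨i, hi⟩ = (α, .node Δ' Γ') → Γ.get ⟨j, hj⟩ = (β, s) → β < α →
      JayR (.node Δ Γ)
        (.node Δ ((Γ.set i (α, .node Δ' (Γ' ++ [(β, s)]))).eraseIdx j))

inductive Ax : Type where
  | four | mono | jay
deriving DecidableEq

def axRule : Ax → MTree → MTree → Prop
  | .four => FourR
  | .mono => MonoR
  | .jay  => JayR

def rootStep (A : Set Ax) (t t' : MTree) : Prop :=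
  RhoPlus t t' ∨ RhoMinus t t' ∨ Sigma' t t' ∨ PiPlus t t' ∨ PiMinus t t' ∨
    ∃ a ∈ A, axRule a t t'

def deepStep (R : MTree → MTree → Prop) (t t' : MTree) : Prop :=
  ∃ k s', IsPos k t ∧ R (subtree k t) s' ∧ t' = replace k t s'

def Rw (A : Set Ax) : MTree → MTree → Prop :=
  Relation.ReflTransGen (deepStep (rootStep A))

end MTree

inductive SPF : Type where
  | top
  | var : ℕ → SPF
  | dia : ℕ → SPF → SPF
  | and : SPF → SPF → SPF

namespace SPF

def md : SPF → ℕ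
  | .top => 0
  | .var _ => 0
  | .dia _ φ => φ.md + 1
  | .and φ ψ => max φ.md ψ.md

def bigAnd : List SPF → SPF
  | [] => .top
  | φ :: l => .and φ (bigAnd l)

def toTree : SPF → MTree
  | .top => .node [] []
  | .var p => .node [p] []
  | .dia α φ => .node [] [(α, toTree φ)]
  | .and φ ψ => (toTree φ).sum (toTree ψ)

end SPF

namespace MTree
mutual
def toForm : MTree → SPF
  | .node Δ Γ => .and (SPF.bigAnd (Δ.map .var)) (toFormL Γ)
def toFormL : List (ℕ × MTree) → SPF
  | [] => .top
  | (α, t) :: Γ => .and (.dia α (toForm t)) (toFormL Γ)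
end
end MTree

inductive Deriv (A : Set MTree.Ax) : SPF → SPF → Prop where
  | refl (φ) : Deriv A φ φ
  | top (φ) : Deriv A φ .top
  | trans {φ ψ χ} : Deriv A φ ψ → Deriv A ψ χ → Deriv A φ χ
  | andE1 (φ ψ) : Deriv A (.and φ ψ) φ
  | andE2 (φ ψ) : Deriv A (.and φ ψ) ψ
  | andI {φ ψ χ} : Deriv A φ ψ → Deriv A φ χ → Deriv A φ (.and ψ χ)
  | dist {φ ψ} (α : ℕ) : Deriv A φ ψ → Deriv A (.dia α φ) (.dia α ψ)
  | four (α : ℕ) (φ) : MTree.Ax.four ∈ A → Deriv A (.dia α (.dia α φ)) (.dia α φ)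
  | mono (α β : ℕ) (φ) : MTree.Ax.mono ∈ A → β < α → Deriv A (.dia α φ) (.dia β φ)
  | jay (α β : ℕ) (φ ψ) : MTree.Ax.jay ∈ A → β < α →
      Deriv A (.and (.dia α φ) (.dia β ψ)) (.dia α (.and φ (.dia β ψ)))

inductive RuleKind : Type where
  | rhoP | rhoM | sigma | piP | piM | four | mono | jay
deriving DecidableEq

def RuleKind.rel : RuleKind → MTree → MTree → Prop
  | .rhoP => MTree.RhoPlus
  | .rhoM => MTree.RhoMinus
  | .sigma => MTree.Sigma'
  | .piP => MTree.PiPlus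
  | .piM => MTree.PiMinus
  | .four => MTree.FourR
  | .mono => MTree.MonoR
  | .jay => MTree.JayR

def listRw : List RuleKind → MTree → MTree → Prop
  | [], t, s => t = s
  | μ :: Ω, t, s => ∃ u, MTree.deepStep μ.rel t u ∧ listRw Ω u s



namespace MTree

theorem modify_append_left' {α : Type _} (f : α → α) :
    ∀ (l l' : List α) (i : ℕ), i < l.length →
      (l ++ l').modify i f = l.modify i f ++ l'
  | a :: l, l', 0, _ => by simp
  | a :: l, l', i+1, h => by
      simp only [List.cons_append, List.modify_succ_cons]
      rw [modify_append_left' f l l' i (Nat.lt_of_succ_lt_succ h)]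

theorem modify_append_right' {α : Type _} (f : α → α) :
    ∀ (l l' : List α) (i : ℕ),
      (l ++ l').modify (l.length + i) f = l ++ l'.modify i f
  | [], l', i => by simp
  | a :: l, l', i => by
      simp only [List.cons_append, List.length_cons, Nat.succ_add, List.modify_succ_cons]
      rw [modify_append_right' f l l' i]

theorem rw_prepend_atoms (A : Set Ax) :
    ∀ (L Δ : List ℕ) (Γ : List (ℕ × MTree)), (∀ x ∈ L, x ∈ Δ) →
      Rw A (.node Δ Γ) (.node (L ++ Δ) Γ)
  | [], Δ, Γ, _ => Relation.ReflTransGen.refl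
  | x :: L, Δ, Γ, hL => by
    have ih := rw_prepend_atoms A L Δ Γ (fun y hy => hL y (List.mem_cons_of_mem _ hy))
    refine ih.tail ?_
    have hx : x ∈ L ++ Δ := List.mem_append_right _ (hL x List.mem_cons_self)
    obtain ⟨i, hi, hxi⟩ := List.getElem_of_mem hx
    refine ⟨[], _, IsPos.nil _, Or.inl (RhoPlus.mk (L ++ Δ) Γ i hi), ?_⟩
    simp [replace, List.get_eq_getElem, hxi]

theorem rw_prepend_children (A : Set Ax) :
    ∀ (L Γ : List (ℕ × MTree)) (Δ : List ℕ), (∀ x ∈ L, x ∈ Γ) →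
      Rw A (.node Δ Γ) (.node Δ (L ++ Γ))
  | [], Γ, Δ, _ => Relation.ReflTransGen.refl
  | x :: L, Γ, Δ, hL => by
    have ih := rw_prepend_children A L Γ Δ (fun y hy => hL y (List.mem_cons_of_mem _ hy))
    refine ih.tail ?_
    have hx : x ∈ L ++ Γ := List.mem_append_right _ (hL x List.mem_cons_self)
    obtain ⟨i, hi, hxi⟩ := List.getElem_of_mem hx
    refine ⟨[], _, IsPos.nil _,
      Or.inr (Or.inr (Or.inr (Or.inl (PiPlus.mk Δ (L ++ Γ) i hi)))), ?_⟩
    simp [replace, List.get_eq_getElem, hxi]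


theorem rw_erase_suffix (A : Set Ax) :
    ∀ (L P : List ℕ) (Γ : List (ℕ × MTree)),
      Rw A (.node (P ++ L) Γ) (.node P Γ)
  | [], P, Γ => by rw [List.append_nil]; exact Relation.ReflTransGen.refl
  | a :: L, P, Γ => by
    have step : deepStep (rootStep A) (.node (P ++ a :: L) Γ) (.node (P ++ L) Γ) := by
      refine ⟨[], _, IsPos.nil _,
        Or.inr (Or.inl (RhoMinus.mk (P ++ a :: L) Γ P.length (by simp))), ?_⟩
      simp [replace, List.eraseIdx_append_of_length_le (Nat.le_refl _)]
    exact (Relation.ReflTransGen.single step).trans (rw_erase_suffix A L P Γ)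

theorem rw_retlist (A : Set Ax) (L L' : List ℕ) (Γ : List (ℕ × MTree))
    (h : ∀ x ∈ L', x ∈ L) : Rw A (.node L Γ) (.node L' Γ) :=
  (rw_prepend_atoms A L' L Γ h).trans (rw_erase_suffix A L L' Γ)

theorem rw_erase_suffix_children (A : Set Ax) :
    ∀ (L P : List (ℕ × MTree)) (Δ : List ℕ),
      Rw A (.node Δ (P ++ L)) (.node Δ P)
  | [], P, Δ => by rw [List.append_nil]; exact Relation.ReflTransGen.refl
  | a :: L, P, Δ => by
    have step : deepStep (rootStep A) (.node Δ (P ++ a :: L)) (.node Δ (P ++ L)) := by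
      refine ⟨[], _, IsPos.nil _,
        Or.inr (Or.inr (Or.inr (Or.inr (Or.inl
          (PiMinus.mk Δ (P ++ a :: L) P.length (by simp)))))), ?_⟩
      simp [replace, List.eraseIdx_append_of_length_le (Nat.le_refl _)]
    exact (Relation.ReflTransGen.single step).trans (rw_erase_suffix_children A L P Δ)

theorem rw_retlist_children (A : Set Ax) (L L' : List (ℕ × MTree)) (Δ : List ℕ)
    (h : ∀ x ∈ L', x ∈ L) : Rw A (.node Δ L) (.node Δ L') :=
  (rw_prepend_children A L' L Δ h).trans (rw_erase_suffix_children A L L' Δ)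

theorem rootStep_sum_left (A : Set Ax) {t r : MTree} (u : MTree)
    (h : rootStep A t r) : rootStep A (t.sum u) (r.sum u) := by
  obtain ⟨Δu, Γu⟩ := u
  rcases h with h | h | h | h | h | ⟨a, ha, h⟩
  · obtain ⟨Δ, Γ, i, hh⟩ := h
    refine Or.inl ?_
    have h' : i < (Δ ++ Δu).length := by simp; omega
    have t2 := RhoPlus.mk (Δ ++ Δu) (Γ ++ Γu) i h'
    simp only [List.get_eq_getElem, List.getElem_append_left hh] at t2
    simpa [sum] using t2
  · obtain ⟨Δ, Γ, i, hh⟩ := h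
    refine Or.inr (Or.inl ?_)
    have h' : i < (Δ ++ Δu).length := by simp; omega
    have t2 := RhoMinus.mk (Δ ++ Δu) (Γ ++ Γu) i h'
    rw [List.eraseIdx_append_of_lt_length hh] at t2
    simpa [sum] using t2
  · obtain ⟨Δ, Γ, i, j, hi, hj, hne⟩ := h
    refine Or.inr (Or.inr (Or.inl ?_))
    have hi' : i < (Γ ++ Γu).length := by simp; omega
    have hj' : j < (Γ ++ Γu).length := by simp; omega
    have t2 := Sigma'.mk (Δ ++ Δu) (Γ ++ Γu) i j hi' hj' hne
    simp only [List.get_eq_getElem, List.getElem_append_left hi,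
      List.getElem_append_left hj] at t2
    rw [List.set_append_left _ _ hi,
      List.set_append_left _ _ (by simpa using hj)] at t2
    simpa [sum] using t2
  · obtain ⟨Δ, Γ, i, hh⟩ := h
    refine Or.inr (Or.inr (Or.inr (Or.inl ?_)))
    have h' : i < (Γ ++ Γu).length := by simp; omega
    have t2 := PiPlus.mk (Δ ++ Δu) (Γ ++ Γu) i h'
    simp only [List.get_eq_getElem, List.getElem_append_left hh] at t2
    simpa [sum] using t2
  · obtain ⟨Δ, Γ, i, hh⟩ := h
    refine Or.inr (Or.inr (Or.inr (Or.inr (Or.inl ?_))))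
    have h' : i < (Γ ++ Γu).length := by simp; omega
    have t2 := PiMinus.mk (Δ ++ Δu) (Γ ++ Γu) i h'
    rw [List.eraseIdx_append_of_lt_length hh] at t2
    simpa [sum] using t2
  · refine Or.inr (Or.inr (Or.inr (Or.inr (Or.inr ?_))))
    cases a with
    | four =>
      obtain ⟨Δ, Γ, i, hi, β, s, hget⟩ := h
      refine ⟨.four, ha, ?_⟩
      have hi' : i < (Γ ++ Γu).length := by simp; omega
      have t2 := FourR.mk (Δ ++ Δu) (Γ ++ Γu) i hi' β s
        (by simp only [List.get_eq_getElem, List.getElem_append_left hi]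
            simpa [List.get_eq_getElem] using hget)
      rw [List.set_append_left _ _ hi] at t2
      simpa [sum, axRule] using t2
    | mono =>
      obtain ⟨Δ, Γ, i, hi, α, β, s, hget, hba⟩ := h
      refine ⟨.mono, ha, ?_⟩
      have hi' : i < (Γ ++ Γu).length := by simp; omega
      have t2 := MonoR.mk (Δ ++ Δu) (Γ ++ Γu) i hi' α β s
        (by simp only [List.get_eq_getElem, List.getElem_append_left hi]
            simpa [List.get_eq_getElem] using hget) hba
      rw [List.set_append_left _ _ hi] at t2
      simpa [sum, axRule] using t2
    | jay =>
      obtain ⟨Δ, Γ, i, j, hi, hj, α, β, Δ', Γ', s, hne, hgi, hgj, hba⟩ := h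
      refine ⟨.jay, ha, ?_⟩
      have hi' : i < (Γ ++ Γu).length := by simp; omega
      have hj' : j < (Γ ++ Γu).length := by simp; omega
      have t2 := JayR.mk (Δ ++ Δu) (Γ ++ Γu) i j hi' hj' α β Δ' Γ' s hne
        (by simp only [List.get_eq_getElem, List.getElem_append_left hi]
            simpa [List.get_eq_getElem] using hgi)
        (by simp only [List.get_eq_getElem, List.getElem_append_left hj]
            simpa [List.get_eq_getElem] using hgj) hba
      rw [List.set_append_left _ _ hi,
        List.eraseIdx_append_of_lt_length (by simpa using hj)] at t2
      simpa [sum, axRule] using t2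

theorem rw_of_rootStep (A : Set Ax) {t r : MTree} (h : rootStep A t r) : Rw A t r :=
  Relation.ReflTransGen.single ⟨[], r, IsPos.nil _, h, rfl⟩

theorem rw_rootStep_sum_right (A : Set Ax) {t r : MTree} (u : MTree)
    (h : rootStep A t r) : Rw A (u.sum t) (u.sum r) := by
  obtain ⟨Δu, Γu⟩ := u
  rcases h with h | h | h | h | h | ⟨a, ha, h⟩
  · obtain ⟨Δ, Γ, i, hh⟩ := h
    show Rw A (.node (Δu ++ Δ) (Γu ++ Γ)) (.node (Δu ++ Δ.get ⟨i, hh⟩ :: Δ) (Γu ++ Γ))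
    refine rw_retlist A _ _ _ ?_
    intro x hx
    simp only [List.get_eq_getElem, List.mem_append, List.mem_cons] at hx ⊢
    rcases hx with h1 | h1 | h1
    · exact Or.inl h1
    · exact Or.inr (h1 ▸ List.getElem_mem hh)
    · exact Or.inr h1
  · obtain ⟨Δ, Γ, i, hh⟩ := h
    refine rw_of_rootStep A (Or.inr (Or.inl ?_))
    have h' : Δu.length + i < (Δu ++ Δ).length := by simp; omega
    have t2 := RhoMinus.mk (Δu ++ Δ) (Γu ++ Γ) (Δu.length + i) h'
    rw [List.eraseIdx_append_of_length_le (Nat.le_add_right _ _)] at t2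
    simp only [Nat.add_sub_cancel_left] at t2
    simpa [sum] using t2
  · obtain ⟨Δ, Γ, i, j, hi, hj, hne⟩ := h
    refine rw_of_rootStep A (Or.inr (Or.inr (Or.inl ?_)))
    have hi' : Γu.length + i < (Γu ++ Γ).length := by simp; omega
    have hj' : Γu.length + j < (Γu ++ Γ).length := by simp; omega
    have t2 := Sigma'.mk (Δu ++ Δ) (Γu ++ Γ) (Γu.length + i) (Γu.length + j) hi' hj'
      (by omega)
    simp only [List.get_eq_getElem,
      List.getElem_append_right (Nat.le_add_right Γu.length i),
      List.getElem_append_right (Nat.le_add_right Γu.length j),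
      Nat.add_sub_cancel_left] at t2
    rw [List.set_append_right _ _ (Nat.le_add_right _ _),
      List.set_append_right _ _ (Nat.le_add_right _ _)] at t2
    simp only [Nat.add_sub_cancel_left] at t2
    simpa [sum] using t2
  · obtain ⟨Δ, Γ, i, hh⟩ := h
    show Rw A (.node (Δu ++ Δ) (Γu ++ Γ)) (.node (Δu ++ Δ) (Γu ++ Γ.get ⟨i, hh⟩ :: Γ))
    refine rw_retlist_children A _ _ _ ?_
    intro x hx
    simp only [List.get_eq_getElem, List.mem_append, List.mem_cons] at hx ⊢
    rcases hx with h1 | h1 | h1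
    · exact Or.inl h1
    · exact Or.inr (h1 ▸ List.getElem_mem hh)
    · exact Or.inr h1
  · obtain ⟨Δ, Γ, i, hh⟩ := h
    refine rw_of_rootStep A (Or.inr (Or.inr (Or.inr (Or.inr (Or.inl ?_)))))
    have h' : Γu.length + i < (Γu ++ Γ).length := by simp; omega
    have t2 := PiMinus.mk (Δu ++ Δ) (Γu ++ Γ) (Γu.length + i) h'
    rw [List.eraseIdx_append_of_length_le (Nat.le_add_right _ _)] at t2
    simp only [Nat.add_sub_cancel_left] at t2
    simpa [sum] using t2
  · refine rw_of_rootStep A (Or.inr (Or.inr (Or.inr (Or.inr (Or.inr ?_)))))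
    cases a with
    | four =>
      obtain ⟨Δ, Γ, i, hi, β, s, hget⟩ := h
      refine ⟨.four, ha, ?_⟩
      have hi' : Γu.length + i < (Γu ++ Γ).length := by simp; omega
      have t2 := FourR.mk (Δu ++ Δ) (Γu ++ Γ) (Γu.length + i) hi' β s
        (by simp only [List.get_eq_getElem,
              List.getElem_append_right (Nat.le_add_right Γu.length i),
              Nat.add_sub_cancel_left]
            simpa [List.get_eq_getElem] using hget)
      rw [List.set_append_right _ _ (Nat.le_add_right _ _)] at t2
      simp only [Nat.add_sub_cancel_left] at t2
      simpa [sum, axRule] using t2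
    | mono =>
      obtain ⟨Δ, Γ, i, hi, α, β, s, hget, hba⟩ := h
      refine ⟨.mono, ha, ?_⟩
      have hi' : Γu.length + i < (Γu ++ Γ).length := by simp; omega
      have t2 := MonoR.mk (Δu ++ Δ) (Γu ++ Γ) (Γu.length + i) hi' α β s
        (by simp only [List.get_eq_getElem,
              List.getElem_append_right (Nat.le_add_right Γu.length i),
              Nat.add_sub_cancel_left]
            simpa [List.get_eq_getElem] using hget) hba
      rw [List.set_append_right _ _ (Nat.le_add_right _ _)] at t2
      simp only [Nat.add_sub_cancel_left] at t2
      simpa [sum, axRule] using t2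
    | jay =>
      obtain ⟨Δ, Γ, i, j, hi, hj, α, β, Δ', Γ', s, hne, hgi, hgj, hba⟩ := h
      refine ⟨.jay, ha, ?_⟩
      have hi' : Γu.length + i < (Γu ++ Γ).length := by simp; omega
      have hj' : Γu.length + j < (Γu ++ Γ).length := by simp; omega
      have t2 := JayR.mk (Δu ++ Δ) (Γu ++ Γ) (Γu.length + i) (Γu.length + j) hi' hj'
        α β Δ' Γ' s (by omega)
        (by simp only [List.get_eq_getElem,
              List.getElem_append_right (Nat.le_add_right Γu.length i),
              Nat.add_sub_cancel_left]
            simpa [List.get_eq_getElem] using hgi)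
        (by simp only [List.get_eq_getElem,
              List.getElem_append_right (Nat.le_add_right Γu.length j),
              Nat.add_sub_cancel_left]
            simpa [List.get_eq_getElem] using hgj) hba
      rw [List.set_append_right _ _ (Nat.le_add_right _ _),
        List.eraseIdx_append_of_length_le (Nat.le_add_right _ _)] at t2
      simp only [Nat.add_sub_cancel_left, List.length_set] at t2
      simpa [sum, axRule] using t2

theorem deepStep_sum_left (A : Set Ax) {t r : MTree} (u : MTree)
    (h : deepStep (rootStep A) t r) : deepStep (rootStep A) (t.sum u) (r.sum u) := by
  obtain ⟨k, s', hpos, hstep, rfl⟩ := h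
  cases k with
  | nil => exact ⟨[], s'.sum u, IsPos.nil _, rootStep_sum_left A u hstep, rfl⟩
  | cons i k' =>
    cases hpos with
    | @cons Δ Γ _ _ hi hk =>
      obtain ⟨Δu, Γu⟩ := u
      have hi' : i < (Γ ++ Γu).length := by simp; omega
      refine ⟨i :: k', s', ?_, ?_, ?_⟩
      · refine IsPos.cons hi' ?_
        simpa [List.get_eq_getElem, List.getElem_append_left hi] using hk
      · have e1 : subtree (i :: k') ((MTree.node Δ Γ).sum (MTree.node Δu Γu))
            = subtree k' (Γ[i]).2 := by
          simp [sum, subtree, List.getElem?_append_left hi, List.getElem?_eq_getElem hi]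
        have e2 : subtree (i :: k') (MTree.node Δ Γ) = subtree k' (Γ[i]).2 := by
          simp [subtree, List.getElem?_eq_getElem hi]
        rw [e1, ← e2]; exact hstep
      · simp only [sum, replace]
        rw [modify_append_left' _ Γ Γu i hi]

theorem rw_deepStep_sum_right (A : Set Ax) {t r : MTree} (u : MTree)
    (h : deepStep (rootStep A) t r) : Rw A (u.sum t) (u.sum r) := by
  obtain ⟨k, s', hpos, hstep, rfl⟩ := h
  cases k with
  | nil => exact rw_rootStep_sum_right A u hstep
  | cons i k' =>
    cases hpos with
    | @cons Δ Γ _ _ hi hk =>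
      obtain ⟨Δu, Γu⟩ := u
      have hi' : Γu.length + i < (Γu ++ Γ).length := by simp; omega
      have hge : (Γu ++ Γ)[Γu.length + i]'hi' = Γ[i] := by
        rw [List.getElem_append_right (Nat.le_add_right _ _)]
        simp
      refine Relation.ReflTransGen.single ⟨(Γu.length + i) :: k', s', ?_, ?_, ?_⟩
      · refine IsPos.cons hi' ?_
        rw [List.get_eq_getElem, hge]
        simpa [List.get_eq_getElem] using hk
      · have e1 : subtree ((Γu.length + i) :: k') ((MTree.node Δu Γu).sum (MTree.node Δ Γ))
            = subtree k' (Γ[i]).2 := by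
          have h2 : (Γu ++ Γ)[Γu.length + i]? = some Γ[i] := by
            rw [List.getElem?_eq_getElem hi', hge]
          simp [sum, subtree, h2]
        have e2 : subtree (i :: k') (MTree.node Δ Γ) = subtree k' (Γ[i]).2 := by
          simp [subtree, List.getElem?_eq_getElem hi]
        rw [e1, ← e2]; exact hstep
      · simp only [sum, replace]
        rw [modify_append_right' _ Γu Γ i]

theorem Rw_sum_left (A : Set Ax) {t s : MTree} (h : Rw A t s) (u : MTree) :
    Rw A (t.sum u) (s.sum u) := by
  induction h with
  | refl => exact Relation.ReflTransGen.refl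
  | tail _ hbc ih => exact ih.tail (deepStep_sum_left A u hbc)

theorem Rw_sum_right (A : Set Ax) {t s : MTree} (h : Rw A t s) (u : MTree) :
    Rw A (u.sum t) (u.sum s) := by
  induction h with
  | refl => exact Relation.ReflTransGen.refl
  | tail _ hbc ih => exact ih.trans (rw_deepStep_sum_right A u hbc)

theorem rw_dup (A : Set Ax) (t : MTree) : Rw A t (t.sum t) := by
  obtain ⟨Δ, Γ⟩ := t
  have h1 := rw_prepend_atoms A Δ Δ Γ (fun x hx => hx)
  have h2 := rw_prepend_children A Γ Γ (Δ ++ Δ) (fun x hx => hx)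
  have e : (MTree.node Δ Γ).sum (MTree.node Δ Γ) = MTree.node (Δ ++ Δ) (Γ ++ Γ) := rfl
  rw [e]
  exact h1.trans h2

end MTree

theorem stmt14 (A : Set MTree.Ax) (t s s' : MTree)
    (h1 : MTree.Rw A t s) (h2 : MTree.Rw A t s') :
    MTree.Rw A t (s.sum s') := by
  exact ((MTree.rw_dup A t).trans (MTree.Rw_sum_left A h1 t)).trans
    (MTree.Rw_sum_right A h2 s)
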